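/- Let X be a zero-dimensional topological space (the clopen sets form a base) such that U_{ℵ₀}(X) is separable in the uniform metric: there exists a countable set D ⊆ U_{ℵ₀}(X) such that for every f ∈ U_{ℵ₀}(X) and every ε > 0 there exists g ∈ D with |f(x) − g(x)| < ε for all x ∈ X. Then X is second-countable. -/
import Mathlib


open Set TopologicalSpace

/-- `f ∈ U_{ℵ₀}(X)`: `f : X → ℝ` is continuous and for every `ε > 0` there is a countable
clopen cover of `X` on each member of which the oscillation of `f` is at most `ε`. -/
def MemUCountableReal {X : Type*} [TopologicalSpace X] (f : X → ℝ) : Prop :=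
  Continuous f ∧ ∀ ε : ℝ, 0 < ε → ∃ 𝒜 : Set (Set X), 𝒜.Countable ∧ ⋃₀ 𝒜 = Set.univ ∧
    ∀ A ∈ 𝒜, IsClopen A ∧ ∀ x ∈ A, ∀ y ∈ A, |f x - f y| ≤ ε

theorem stmt7 {X : Type*} [TopologicalSpace X]
    -- `X` is zero-dimensional: the clopen sets form a base
    (hzd : IsTopologicalBasis {U : Set X | IsClopen U})
    -- `U_{ℵ₀}(X)` is separable in the uniform metric
    (D : Set (X → ℝ)) (hDcount : D.Countable) (hDU : ∀ g ∈ D, MemUCountableReal g)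
    (hDdense : ∀ f : X → ℝ, MemUCountableReal f → ∀ ε : ℝ, 0 < ε →
      ∃ g ∈ D, ∀ x : X, |f x - g x| < ε) :
    SecondCountableTopology X := by
  classical
  have hcov : ∀ g ∈ D, ∃ 𝒜 : Set (Set X), 𝒜.Countable ∧ ⋃₀ 𝒜 = Set.univ ∧
      ∀ A ∈ 𝒜, IsClopen A ∧ ∀ x ∈ A, ∀ y ∈ A, |g x - g y| ≤ 1/4 :=
    fun g hg => (hDU g hg).2 (1/4) (by norm_num)
  choose! 𝒜 h1 h2 h3 using hcov
  set B : Set (Set X) := ⋃ g ∈ D, 𝒜 g with hBdef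
  have hBc : B.Countable := hDcount.biUnion h1
  have hbasis : IsTopologicalBasis B := by
    refine isTopologicalBasis_of_isOpen_of_nhds ?_ ?_
    · intro A hA
      obtain ⟨g, hg, hAg⟩ := mem_iUnion₂.mp hA
      exact (h3 g hg A hAg).1.isOpen
    · intro x u hxu hu
      obtain ⟨U, hUc, hxU, hUu⟩ := hzd.exists_subset_of_mem_open hxu hu
      have hUc : IsClopen U := hUc
      set f : X → ℝ := U.indicator (fun _ => (1:ℝ)) with hf
      have hfc : Continuous f := continuous_indicator (by simp [hUc]) <|
        continuous_const.continuousOn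
      have hfU : MemUCountableReal f := by
        refine ⟨hfc, fun ε hε => ⟨{U, Uᶜ}, (countable_singleton Uᶜ).insert U, ?_, ?_⟩⟩
        · simp [Set.sUnion_pair]
        · rintro A (rfl | rfl)
          · refine ⟨hUc, fun a ha b hb => ?_⟩
            simp [hf, indicator_of_mem, ha, hb, le_of_lt hε]
          · refine ⟨hUc.compl, fun a ha b hb => ?_⟩
            simp [hf, indicator_of_notMem, ha, hb, le_of_lt hε,
              Set.notMem_of_mem_compl]
      obtain ⟨g, hgD, hgclose⟩ := hDdense f hfU (1/3) (by norm_num)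
      have hx : x ∈ ⋃₀ 𝒜 g := (h2 g hgD).symm ▸ mem_univ x
      obtain ⟨A, hA, hxA⟩ := hx
      refine ⟨A, mem_iUnion₂.mpr ⟨g, hgD, hA⟩, hxA, fun y hyA => ?_⟩
      apply hUu
      by_contra hyU
      have hfx : f x = 1 := indicator_of_mem hxU _
      have hfy : f y = 0 := indicator_of_notMem hyU _
      have hosc : |g x - g y| ≤ 1/4 := (h3 g hgD A hA).2 x hxA y hyA
      have h1' := abs_lt.mp (hgclose x)
      have h2' := abs_lt.mp (hgclose y)
      have h3' := abs_le.mp hosc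
      rw [hfx] at h1'
      rw [hfy] at h2'
      obtain ⟨_, _⟩ := h1'
      obtain ⟨_, _⟩ := h2'
      obtain ⟨_, _⟩ := h3'
      linarith
  exact hbasis.secondCountableTopology hBc
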